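/- Let F₁,...,Fₘ ∈ k[X₁,...,Xₘ] with det Jac(F₁,...,Fₘ) ∈ k*, and let P₁,...,Pₘ ∈ k[X₁,...,Xₘ]. Then the system Fᵢ(𝒲₁(t),...,𝒲ₘ(t)) = tXᵢ + (1-t)Fᵢ(P₁,...,Pₘ) for all i, with initial conditions 𝒲ᵢ(0) = Pᵢ, has a unique solution 𝒲₁(t),...,𝒲ₘ(t) ∈ k[X₁,...,Xₘ][[t]]. -/

import Mathlib

open MvPolynomial

section Aux

variable {k : Type*} [CommRing k] {m : ℕ}

/-- First-order Taylor expansion modulo `I ^ 2`. -/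
lemma taylor_aux {S : Type*} [CommRing S] [Algebra k S] (I : Ideal S)
    (F : MvPolynomial (Fin m) k) (A B : Fin m → S) (h : ∀ j, A j - B j ∈ I) :
    aeval A F - aeval B F - ∑ j, aeval B (pderiv j F) * (A j - B j) ∈ I ^ 2 := by
  induction F using MvPolynomial.induction_on with
  | C a => simpa using (I ^ 2).zero_mem
  | add p q hp hq =>
      have := (I ^ 2).add_mem hp hq
      convert this using 1
      simp only [map_add, add_mul, Finset.sum_add_distrib]
      ring
  | mul_X p i hp =>
      have hD : (∑ j, aeval (R := k) B (pderiv j p) * (A j - B j)) ∈ I :=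
        Ideal.sum_mem _ fun j _ => I.mul_mem_left _ (h j)
      have key : ∑ j, aeval B (pderiv j (p * X i)) * (A j - B j)
          = (∑ j, aeval B (pderiv j p) * (A j - B j)) * B i
            + aeval B p * (A i - B i) := by
        classical
        simp only [Derivation.leibniz, smul_eq_mul, map_add, map_mul, aeval_X, add_mul,
          Finset.sum_add_distrib]
        rw [add_comm, Finset.sum_mul]
        congr 1
        · refine Finset.sum_congr rfl fun j _ => by ring
        · rw [Finset.sum_eq_single i]
          · simp
          · intro j _ hj
            classical
            simp [pderiv_X, Pi.single_eq_of_ne (Ne.symm hj)]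
          · simp
      rw [map_mul, map_mul, key, aeval_X, aeval_X]
      have : aeval A p * A i - aeval B p * B i
            - ((∑ j, aeval B (pderiv j p) * (A j - B j)) * B i
              + aeval B p * (A i - B i))
          = (aeval A p - aeval B p - ∑ j, aeval B (pderiv j p) * (A j - B j)) * A i
            + (∑ j, aeval B (pderiv j p) * (A j - B j)) * (A i - B i) := by
        ring
      rw [this]
      refine (I ^ 2).add_mem ((I ^ 2).mul_mem_right _ hp) ?_
      rw [pow_two]
      exact Ideal.mul_mem_mul hD (h i)

/-- constant coefficient of `aeval` into power series. -/
lemma constCoeff_aeval {R : Type*} [CommRing R] [Algebra k R]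
    (B : Fin m → PowerSeries R) (Q : MvPolynomial (Fin m) k) :
    PowerSeries.constantCoeff (aeval B Q)
      = aeval (fun j => PowerSeries.constantCoeff (B j)) Q := by
  induction Q using MvPolynomial.induction_on with
  | C a => simp [PowerSeries.algebraMap_apply]
  | add p q hp hq => simp [hp, hq]
  | mul_X p i hp => simp [hp]

lemma coeff_mul_of_lowzero {R : Type*} [CommRing R] (h g : PowerSeries R) (n : ℕ)
    (hg : ∀ l < n, PowerSeries.coeff l g = 0) :
    PowerSeries.coeff n (h * g)
      = PowerSeries.constantCoeff h * PowerSeries.coeff n g := by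
  rw [PowerSeries.coeff_mul, Finset.sum_eq_single (0, n)]
  · simp [PowerSeries.coeff_zero_eq_constantCoeff]
  · rintro ⟨a, b⟩ hab hne
    have hb : b < n := by
      rcases Nat.lt_or_ge b n with h' | h'
      · exact h'
      · exfalso
        have hab' : a + b = n := by simpa [Finset.mem_antidiagonal] using hab
        have ha : a = 0 := by omega
        have hb : b = n := by omega
        exact hne (by simp [ha, hb])
    rw [hg b hb, mul_zero]
  · intro hmem
    exact absurd (by simp [Finset.mem_antidiagonal]) hmem

end Aux

section Construction

variable (k : Type*) [Field k] (m : ℕ) (F P : Fin m → MvPolynomial (Fin m) k)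

/-- The Jacobian of `F` evaluated at `P`. -/
noncomputable def Jmat : Matrix (Fin m) (Fin m) (MvPolynomial (Fin m) k) :=
  Matrix.of fun i j => aeval P (pderiv j (F i))

/-- The target power series. -/
noncomputable def Gser (i : Fin m) : PowerSeries (MvPolynomial (Fin m) k) :=
  PowerSeries.X * PowerSeries.C (X i) +
    (1 - PowerSeries.X) * PowerSeries.C (aeval P (F i))

/-- The coefficients of the solution, built by recursion:
`Ucoef n l` is the `l`-th coefficient, correct for `l ≤ n`. -/
noncomputable def Ucoef : ℕ → ℕ → Fin m → MvPolynomial (Fin m) k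
  | 0 => fun l => if l = 0 then P else 0
  | n+1 => fun l =>
      if l = n + 1 then
        (Jmat k m F P)⁻¹.mulVec (fun i =>
          PowerSeries.coeff (n+1) (Gser k m F P i)
            - PowerSeries.coeff (n+1)
                (aeval (fun j => PowerSeries.mk fun t =>
                  if t < n+1 then Ucoef n t j else 0) (F i)))
      else Ucoef n l

/-- The candidate solution. -/
noncomputable def Wser (j : Fin m) : PowerSeries (MvPolynomial (Fin m) k) :=
  PowerSeries.mk fun n => Ucoef k m F P n n j

lemma Ucoef_stable : ∀ n l, l ≤ n → Ucoef k m F P n l = Ucoef k m F P l l := by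
  intro n
  induction n with
  | zero =>
      intro l hl
      have : l = 0 := by omega
      subst this
      rfl
  | succ n ih =>
      intro l hl
      by_cases h : l = n + 1
      · subst h; rfl
      · have hl' : l ≤ n := by omega
        rw [show Ucoef k m F P (n+1) l = Ucoef k m F P n l by simp [Ucoef, h], ih l hl']

lemma Wser_coeff (n : ℕ) (j : Fin m) :
    PowerSeries.coeff n (Wser k m F P j) = Ucoef k m F P n n j := by
  simp [Wser]

/-- The truncation of `Wser` below `n`. -/
noncomputable def Bser (n : ℕ) (j : Fin m) : PowerSeries (MvPolynomial (Fin m) k) :=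
  PowerSeries.mk fun t => if t < n then Ucoef k m F P t t j else 0

lemma Ucoef_succ (n : ℕ) :
    Ucoef k m F P (n+1) (n+1) = (Jmat k m F P)⁻¹.mulVec (fun i =>
      PowerSeries.coeff (n+1) (Gser k m F P i)
        - PowerSeries.coeff (n+1) (aeval (Bser k m F P (n+1)) (F i))) := by
  rw [Ucoef]
  simp only [eq_self_iff_true, if_true]
  have hB : (fun (j : Fin m) => PowerSeries.mk fun t =>
      if t < n+1 then Ucoef k m F P n t j else 0) = Bser k m F P (n+1) := by
    funext j
    apply PowerSeries.ext
    intro t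
    simp only [Bser, PowerSeries.coeff_mk]
    by_cases h : t < n + 1
    · simp only [if_pos h, Ucoef_stable k m F P n t (by omega)]
    · simp [h]
  rw [hB]

end Construction

section Main

variable (k : Type*) [Field k] (m : ℕ) (F P : Fin m → MvPolynomial (Fin m) k)

lemma Jmat_mulVec (hd : IsUnit (Jmat k m F P).det) (n : ℕ) :
    (Jmat k m F P).mulVec (Ucoef k m F P (n+1) (n+1)) = fun i =>
      PowerSeries.coeff (n+1) (Gser k m F P i)
        - PowerSeries.coeff (n+1) (aeval (Bser k m F P (n+1)) (F i)) := by
  rw [Ucoef_succ, Matrix.mulVec_mulVec, Matrix.mul_nonsing_inv _ hd, Matrix.one_mulVec]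

lemma Wser_constantCoeff (j : Fin m) :
    PowerSeries.constantCoeff (Wser k m F P j) = P j := by
  simp [Wser, PowerSeries.constantCoeff_mk, Ucoef]

lemma Gser_constantCoeff (i : Fin m) :
    PowerSeries.constantCoeff (Gser k m F P i) = aeval P (F i) := by
  simp [Gser]

lemma exists_main (hd : IsUnit (Jmat k m F P).det) (i : Fin m) :
    aeval (Wser k m F P) (F i) = Gser k m F P i := by
  apply PowerSeries.ext
  intro n
  match n with
  | 0 =>
      rw [PowerSeries.coeff_zero_eq_constantCoeff_apply,
        PowerSeries.coeff_zero_eq_constantCoeff_apply, constCoeff_aeval,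
        Gser_constantCoeff]
      have hW0 : (fun j => PowerSeries.constantCoeff (Wser k m F P j)) = P := by
        funext j; exact Wser_constantCoeff k m F P j
      rw [hW0]
  | n+1 =>
      set W := Wser k m F P with hWdef
      set B := Bser k m F P (n+1) with hBdef
      have hlow : ∀ j, ∀ l, l < n+1 → PowerSeries.coeff l (W j - B j) = 0 := by
        intro j l hl
        simp [hWdef, hBdef, Wser, Bser, hl, Nat.lt_succ_iff.mp hl]
      have hmem : ∀ j, W j - B j ∈ Ideal.span {(PowerSeries.X : PowerSeries (MvPolynomial (Fin m) k))^(n+1)} :=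
        fun j => Ideal.mem_span_singleton.2 (PowerSeries.X_pow_dvd_iff.2 (hlow j))
      have hT := taylor_aux (Ideal.span {(PowerSeries.X : PowerSeries (MvPolynomial (Fin m) k))^(n+1)})
        (F i) W B hmem
      rw [Ideal.span_singleton_pow, Ideal.mem_span_singleton, ← pow_mul] at hT
      have hT0 : PowerSeries.coeff (n+1) (aeval W (F i) - aeval B (F i)
          - ∑ j, aeval B (pderiv j (F i)) * (W j - B j)) = 0 :=
        PowerSeries.X_pow_dvd_iff.1 hT (n+1) (by omega)
      have hBc : (fun t => PowerSeries.constantCoeff (B t)) = P := by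
        funext t
        simp [hBdef, Bser, PowerSeries.constantCoeff_mk, Ucoef]
      have hsum : PowerSeries.coeff (n+1) (∑ j, aeval B (pderiv j (F i)) * (W j - B j))
          = ∑ j, Jmat k m F P i j * Ucoef k m F P (n+1) (n+1) j := by
        rw [map_sum]
        refine Finset.sum_congr rfl fun j _ => ?_
        rw [coeff_mul_of_lowzero _ _ _ (hlow j)]
        congr 1
        · rw [constCoeff_aeval, hBc]
          rfl
        · simp [hWdef, hBdef, Wser, Bser]
      have hkey := congrFun (Jmat_mulVec k m F P hd n) i
      simp only [Matrix.mulVec, dotProduct] at hkey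
      rw [map_sub, map_sub, hsum, hkey] at hT0
      linear_combination hT0

lemma uniq_main (hd : IsUnit (Jmat k m F P).det)
    (W W' : Fin m → PowerSeries (MvPolynomial (Fin m) k))
    (hE : ∀ i, aeval W (F i) = aeval W' (F i))
    (h0 : ∀ j, PowerSeries.constantCoeff (W j) = P j)
    (h0' : ∀ j, PowerSeries.constantCoeff (W' j) = P j) : W = W' := by
  have key : ∀ n, ∀ j, PowerSeries.coeff n (W j) = PowerSeries.coeff n (W' j) := by
    intro n
    induction n using Nat.strong_induction_on with
    | _ n ih =>
      match n with
      | 0 =>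
          intro j
          rw [PowerSeries.coeff_zero_eq_constantCoeff_apply,
            PowerSeries.coeff_zero_eq_constantCoeff_apply, h0, h0']
      | n+1 =>
          have hlow : ∀ j, ∀ l, l < n+1 → PowerSeries.coeff l (W j - W' j) = 0 := by
            intro j l hl
            rw [map_sub, ih l hl j, sub_self]
          have hmem : ∀ j, W j - W' j ∈ Ideal.span {(PowerSeries.X : PowerSeries (MvPolynomial (Fin m) k))^(n+1)} :=
            fun j => Ideal.mem_span_singleton.2 (PowerSeries.X_pow_dvd_iff.2 (hlow j))
          set d : Fin m → MvPolynomial (Fin m) k := fun j =>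
            PowerSeries.coeff (n+1) (W j) - PowerSeries.coeff (n+1) (W' j) with hd'
          have hW'c : (fun t => PowerSeries.constantCoeff (W' t)) = P := by
            funext t; exact h0' t
          have hJd : (Jmat k m F P).mulVec d = 0 := by
            funext i
            have hT := taylor_aux (Ideal.span {(PowerSeries.X : PowerSeries (MvPolynomial (Fin m) k))^(n+1)})
              (F i) W W' hmem
            rw [Ideal.span_singleton_pow, Ideal.mem_span_singleton, ← pow_mul] at hT
            have hT0 : PowerSeries.coeff (n+1) (aeval W (F i) - aeval W' (F i)
                - ∑ j, aeval W' (pderiv j (F i)) * (W j - W' j)) = 0 :=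
              PowerSeries.X_pow_dvd_iff.1 hT (n+1) (by omega)
            rw [hE i, sub_self, zero_sub, map_neg, map_sum, neg_eq_zero] at hT0
            have hsum : ∀ j ∈ Finset.univ,
                PowerSeries.coeff (n+1) (aeval W' (pderiv j (F i)) * (W j - W' j))
                = Jmat k m F P i j * d j := by
              intro j _
              rw [coeff_mul_of_lowzero _ _ _ (hlow j)]
              congr 1
              · rw [constCoeff_aeval, hW'c]
                rfl
            rw [Finset.sum_congr rfl hsum] at hT0
            simpa [Matrix.mulVec, dotProduct] using hT0
          have hdz : d = 0 := by
            have h2 : (Jmat k m F P)⁻¹.mulVec ((Jmat k m F P).mulVec d) = d := by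
              rw [Matrix.mulVec_mulVec, Matrix.nonsing_inv_mul _ hd, Matrix.one_mulVec]
            rw [← h2, hJd, Matrix.mulVec_zero]
          intro j
          have := congrFun hdz j
          simp only [hd', Pi.zero_apply] at this
          exact sub_eq_zero.1 this
  funext j
  exact PowerSeries.ext fun n => key n j

end Main

/-- If `det Jac(F₁,...,Fₘ)` is a nonzero constant and `P₁,...,Pₘ` are arbitrary
polynomials, then the system `Fᵢ(𝒲₁,...,𝒲ₘ) = tXᵢ + (1-t)Fᵢ(P₁,...,Pₘ)` with
`𝒲ᵢ(0) = Pᵢ` has a unique solution in `k[X₁,...,Xₘ][[t]]`. -/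
theorem stmt15 (k : Type*) [Field k] [CharZero k] (m : ℕ)
    (F P : Fin m → MvPolynomial (Fin m) k)
    (hJ : ∃ c : k, c ≠ 0 ∧
      Matrix.det (Matrix.of fun i j => pderiv j (F i)) = C c) :
    ∃! W : Fin m → PowerSeries (MvPolynomial (Fin m) k),
      (∀ i, aeval W (F i) =
        PowerSeries.X * PowerSeries.C (X i) +
          (1 - PowerSeries.X) * PowerSeries.C (aeval P (F i))) ∧
      (∀ i, PowerSeries.constantCoeff (W i) = P i) := by
  obtain ⟨c, hc, hdet⟩ := hJ
  have hd : IsUnit (Jmat k m F P).det := by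
    have heq : (Jmat k m F P).det
        = aeval P (Matrix.det (Matrix.of fun i j => pderiv j (F i))) := by
      rw [AlgHom.map_det]
      rfl
    rw [heq, hdet, aeval_C]
    exact (isUnit_iff_ne_zero.2 hc).map (algebraMap k (MvPolynomial (Fin m) k))
  refine ⟨Wser k m F P, ⟨fun i => exists_main k m F P hd i, fun i => Wser_constantCoeff k m F P i⟩, ?_⟩
  rintro W' ⟨hW1, hW2⟩
  exact uniq_main k m F P hd W' (Wser k m F P)
    (fun i => (hW1 i).trans (exists_main k m F P hd i).symm) hW2
    (fun j => Wser_constantCoeff k m F P j)
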